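/- For any two-qubit pure state |ψ⟩ (unit vector in ℂ²⊗ℂ²), its nonlocality N(ψ) and concurrence C(ψ) satisfy N(ψ) = 2√(1 + C(ψ)²). -/

import Mathlib

open Matrix Complex
open scoped Kronecker ComplexConjugate

/-- The Pauli matrices `σ₁ = X`, `σ₂ = Y`, `σ₃ = Z`. -/
noncomputable def pauli : Fin 3 → Matrix (Fin 2) (Fin 2) ℂ
  | 0 => !![0, 1; 1, 0]
  | 1 => !![0, -Complex.I; Complex.I, 0]
  | 2 => !![1, 0; 0, -1]

/-- The Bloch vector of the second qubit, `B j = ⟨ψ| (1 ⊗ σⱼ) |ψ⟩`, written out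
explicitly. -/
noncomputable def Bv (ψ : Fin 2 × Fin 2 → ℂ) : Fin 3 → ℂ
  | 0 => conj (ψ (0,0)) * ψ (0,1) + conj (ψ (0,1)) * ψ (0,0)
          + conj (ψ (1,0)) * ψ (1,1) + conj (ψ (1,1)) * ψ (1,0)
  | 1 => -Complex.I * conj (ψ (0,0)) * ψ (0,1) + Complex.I * conj (ψ (0,1)) * ψ (0,0)
          - Complex.I * conj (ψ (1,0)) * ψ (1,1) + Complex.I * conj (ψ (1,1)) * ψ (1,0)
  | 2 => conj (ψ (0,0)) * ψ (0,0) - conj (ψ (0,1)) * ψ (0,1)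
          + conj (ψ (1,0)) * ψ (1,0) - conj (ψ (1,1)) * ψ (1,1)

/-- `B j` is real. -/
lemma Bv_conj (ψ : Fin 2 × Fin 2 → ℂ) (j : Fin 3) : conj (Bv ψ j) = Bv ψ j := by
  fin_cases j <;>
    simp [Bv, map_add, map_sub, _root_.map_mul] <;> ring

set_option maxHeartbeats 2000000 in
/-- Key algebraic identity. -/
lemma key_identity (ψ : Fin 2 × Fin 2 → ℂ) (T : Matrix (Fin 3) (Fin 3) ℝ)
    (hT : ∀ j k, (T j k : ℂ) =
      ∑ p, conj (ψ p) * ((pauli j ⊗ₖ pauli k).mulVec ψ) p) :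
    ∀ j k : Fin 3, (((Tᵀ * T) j k : ℝ) : ℂ) =
      ((∑ p, conj (ψ p) * ((pauli 1 ⊗ₖ pauli 1).mulVec (fun q => conj (ψ q))) p)
        * conj (∑ p, conj (ψ p) * ((pauli 1 ⊗ₖ pauli 1).mulVec (fun q => conj (ψ q))) p))
        * (if j = k then 1 else 0) + Bv ψ j * Bv ψ k := by
  intro j k
  rw [Matrix.mul_apply]
  push_cast
  simp_rw [Matrix.transpose_apply, hT]
  fin_cases j <;> fin_cases k <;>
    (simp [pauli, Bv, Matrix.mulVec, Matrix.kroneckerMap_apply, Fintype.sum_prod_type,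
        Fin.sum_univ_two, Fin.sum_univ_three, dotProduct, map_add, map_sub,
        _root_.map_mul] <;> ring_nf <;> simp only [Complex.I_sq] <;> ring)

set_option maxHeartbeats 1000000 in
/-- sum of squares of B. -/
lemma Bv_sq_sum (ψ : Fin 2 × Fin 2 → ℂ) :
    Bv ψ 0 ^ 2 + Bv ψ 1 ^ 2 + Bv ψ 2 ^ 2 =
      (∑ p, conj (ψ p) * ψ p) ^ 2 -
      ((∑ p, conj (ψ p) * ((pauli 1 ⊗ₖ pauli 1).mulVec (fun q => conj (ψ q))) p)
        * conj (∑ p, conj (ψ p) * ((pauli 1 ⊗ₖ pauli 1).mulVec (fun q => conj (ψ q))) p)) := by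
  simp [pauli, Bv, Matrix.mulVec, Matrix.kroneckerMap_apply, Fintype.sum_prod_type,
      Fin.sum_univ_two, dotProduct, map_add, map_sub, _root_.map_mul] <;>
    ring_nf <;> simp only [Complex.I_sq] <;> ring

theorem stmt7 (ψ : Fin 2 × Fin 2 → ℂ) (hψ : ∑ p, ‖ψ p‖ ^ 2 = 1)
    (T : Matrix (Fin 3) (Fin 3) ℝ)
    (hT : ∀ j k, (T j k : ℂ) =
      ∑ p, conj (ψ p) * ((pauli j ⊗ₖ pauli k).mulVec ψ) p)
    (hHerm : (Tᵀ * T).IsHermitian) (lam : Fin 3 → ℝ) (e : Fin 3 ≃ Fin 3)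
    (hlam : lam = hHerm.eigenvalues ∘ e) (hmono : Antitone lam)
    (C : ℝ)
    (hC : C = ‖(∑ p, conj (ψ p) *
      ((pauli 1 ⊗ₖ pauli 1).mulVec (fun q => conj (ψ q))) p)‖) :
    2 * Real.sqrt (lam 0 + lam 1) = 2 * Real.sqrt (1 + C ^ 2) := by
  classical
  set z : ℂ := ∑ p, conj (ψ p) * ((pauli 1 ⊗ₖ pauli 1).mulVec (fun q => conj (ψ q))) p with hzdef
  -- C² = z * conj z
  have hC2 : ((C ^ 2 : ℝ) : ℂ) = z * conj z := by
    rw [hC, Complex.sq_norm]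
    exact (Complex.mul_conj _).symm
  -- normalization in complex form
  have hN : (∑ p, conj (ψ p) * ψ p) = 1 := by
    have : ∀ p, conj (ψ p) * ψ p = ((‖ψ p‖ ^ 2 : ℝ) : ℂ) := by
      intro p
      rw [Complex.sq_norm, Complex.normSq_eq_conj_mul_self]
    rw [Finset.sum_congr rfl fun p _ => this p, ← Complex.ofReal_sum, hψ, Complex.ofReal_one]
  -- real Bloch vector
  set β : Fin 3 → ℝ := fun j => (Bv ψ j).re with hβdef
  have hβc : ∀ j, ((β j : ℝ) : ℂ) = Bv ψ j := by
    intro j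
    exact Complex.conj_eq_iff_re.mp (Bv_conj ψ j)
  -- entries of M := TᵀT
  have hM : ∀ j k, (Tᵀ * T) j k = C ^ 2 * (if j = k then 1 else 0) + β j * β k := by
    intro j k
    have h := key_identity ψ T hT j k
    rw [← hzdef] at h
    apply Complex.ofReal_injective
    rw [h, ← hC2, ← hβc j, ← hβc k]
    split_ifs <;> push_cast <;> ring
  -- ∑ β² = 1 - C²
  have hβsum : β 0 ^ 2 + β 1 ^ 2 + β 2 ^ 2 = 1 - C ^ 2 := by
    apply Complex.ofReal_injective
    push_cast
    rw [hβc, hβc, hβc]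
    have h := Bv_sq_sum ψ
    rw [← hzdef, hN] at h
    rw [h, ← hC2]
    push_cast
    ring
  -- C ≤ 1
  have hzval : z = 2 * (conj (ψ (0,1)) * conj (ψ (1,0)) - conj (ψ (0,0)) * conj (ψ (1,1))) := by
    rw [hzdef]
    simp [pauli, Matrix.mulVec, Matrix.kroneckerMap_apply, Fintype.sum_prod_type,
      Fin.sum_univ_two, dotProduct]
    ring
  have hCle : C ^ 2 ≤ 1 := by
    have h1 : ‖z‖ ≤ 1 := by
      rw [hzval]
      have e1 : ‖(2 * (conj (ψ (0,1)) * conj (ψ (1,0)) - conj (ψ (0,0)) * conj (ψ (1,1))))‖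
          ≤ 2 * (‖ψ (0,1)‖ * ‖ψ (1,0)‖
              + ‖ψ (0,0)‖ * ‖ψ (1,1)‖) := by
        rw [norm_mul]
        have := (norm_sub_le (conj (ψ (0,1)) * conj (ψ (1,0)))
          (conj (ψ (0,0)) * conj (ψ (1,1))))
        simp only [norm_mul, Complex.norm_conj, Complex.norm_two] at this ⊢
        nlinarith [this]
      have h2 : ‖ψ (0,0)‖ ^ 2 + ‖ψ (0,1)‖ ^ 2
          + ‖ψ (1,0)‖ ^ 2 + ‖ψ (1,1)‖ ^ 2 = 1 := by
        rw [← hψ]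
        simp [Fintype.sum_prod_type, Fin.sum_univ_two]
        ring
      nlinarith [e1, h2, sq_nonneg (‖ψ (0,1)‖ - ‖ψ (1,0)‖),
        sq_nonneg (‖ψ (0,0)‖ - ‖ψ (1,1)‖)]
    have h0 : 0 ≤ C := hC ▸ norm_nonneg z
    nlinarith [hC ▸ h1]
  -- annihilating polynomial
  have hAnn : ((Tᵀ * T) - C ^ 2 • 1) * ((Tᵀ * T) - 1) = 0 := by
    ext j k
    rw [Matrix.mul_apply]
    fin_cases j <;> fin_cases k <;>
      simp [hM, Fin.sum_univ_three, Matrix.sub_apply, Matrix.smul_apply, Matrix.one_apply,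
        Matrix.zero_apply] <;>
      [ linear_combination (β 0 * β 0) * hβsum;
        linear_combination (β 0 * β 1) * hβsum;
        linear_combination (β 0 * β 2) * hβsum;
        linear_combination (β 1 * β 0) * hβsum;
        linear_combination (β 1 * β 1) * hβsum;
        linear_combination (β 1 * β 2) * hβsum;
        linear_combination (β 2 * β 0) * hβsum;
        linear_combination (β 2 * β 1) * hβsum;
        linear_combination (β 2 * β 2) * hβsum ]
  -- trace
  have htr : (Tᵀ * T).trace = 1 + 2 * C ^ 2 := by
    rw [Matrix.trace_fin_three, hM, hM, hM]
    simp
    linarith [hβsum]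
  -- sum of eigenvalues equals trace
  have hsum : hHerm.eigenvalues 0 + hHerm.eigenvalues 1 + hHerm.eigenvalues 2 = 1 + 2 * C ^ 2 := by
    have hst := hHerm.spectral_theorem
    have htr2 : (Tᵀ * T).trace = ∑ i, hHerm.eigenvalues i := by
      conv_lhs => rw [hst]
      rw [Unitary.conjStarAlgAut_apply, Matrix.trace_mul_cycle,
        Unitary.coe_star_mul_self, Matrix.one_mul,
        Matrix.trace_diagonal]
      simp [RCLike.ofReal_real_eq_id]
    rw [htr, Fin.sum_univ_three] at htr2
    linarith
  -- each eigenvalue is C² or 1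
  have heig : ∀ i, hHerm.eigenvalues i = C ^ 2 ∨ hHerm.eigenvalues i = 1 := by
    intro i
    set μ := hHerm.eigenvalues i with hμ
    set v := ⇑(hHerm.eigenvectorBasis i) with hv
    have hvz : v ≠ 0 := by
      intro h
      apply hHerm.eigenvectorBasis.orthonormal.ne_zero i
      ext x
      exact congrFun h x
    have hmv : (Tᵀ * T) *ᵥ v = μ • v := hHerm.mulVec_eigenvectorBasis i
    have hv1 : ((Tᵀ * T) - 1) *ᵥ v = (μ - 1) • v := by
      rw [Matrix.sub_mulVec, Matrix.one_mulVec, hmv, sub_smul, one_smul]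
    have hv2 : ((Tᵀ * T) - C ^ 2 • 1) *ᵥ ((μ - 1) • v) = ((μ - 1) * (μ - C ^ 2)) • v := by
      rw [Matrix.mulVec_smul, Matrix.sub_mulVec, hmv, Matrix.smul_mulVec,
        Matrix.one_mulVec, ← sub_smul, smul_smul]
    have h2 : (((Tᵀ * T) - C ^ 2 • 1) * ((Tᵀ * T) - 1)) *ᵥ v = ((μ - 1) * (μ - C ^ 2)) • v := by
      rw [← Matrix.mulVec_mulVec, hv1, hv2]
    rw [hAnn, Matrix.zero_mulVec] at h2
    have h3 : (μ - 1) * (μ - C ^ 2) = 0 := by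
      by_contra h
      exact hvz (by simpa [h] using h2.symm)
    rcases mul_eq_zero.mp h3 with h | h
    · right; linarith
    · left; linarith
  -- final bookkeeping
  have hlam' : ∀ j, lam j = C ^ 2 ∨ lam j = 1 := by
    intro j
    rw [hlam]
    exact heig (e j)
  have hlsum : lam 0 + lam 1 + lam 2 = 1 + 2 * C ^ 2 := by
    calc lam 0 + lam 1 + lam 2 = ∑ j, lam j := (Fin.sum_univ_three lam).symm
      _ = ∑ i, hHerm.eigenvalues i := by rw [hlam]; exact Equiv.sum_comp e hHerm.eigenvalues
      _ = 1 + 2 * C ^ 2 := by rw [Fin.sum_univ_three]; exact hsum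
  have m01 : lam 1 ≤ lam 0 := hmono (by decide)
  have m12 : lam 2 ≤ lam 1 := hmono (by decide)
  have hfin : lam 0 + lam 1 = 1 + C ^ 2 := by
    rcases hlam' 0 with h0 | h0 <;> rcases hlam' 1 with h1 | h1 <;>
      rcases hlam' 2 with h2 | h2 <;> linarith [hCle, hlsum, m01, m12, h0, h1, h2]
  rw [hfin]
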